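/- arXiv:1709.05588 — 2 statements merged into one kernel-verified Lean document; each statement's English description precedes it below -/
import Mathlib

section
/- For any subset S of vertices of Q_n (n ≥ 3) with |S| = 3, the vertex boundary of S has at least 3n − 5 elements. -/
/-- The n-dimensional hypercube: vertices are `Fin n → Bool`,
adjacent iff Hamming distance exactly 1. -/
def Qn (n : ℕ) : SimpleGraph (Fin n → Bool) where
  Adj u v := hammingDist u v = 1
  symm := ⟨by intro u v h; rwa [hammingDist_comm]⟩
  loopless := ⟨by intro u h; simp [hammingDist_self] at h⟩

instance (n : ℕ) : DecidableRel (Qn n).Adj :=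
  fun u v => inferInstanceAs (Decidable (hammingDist u v = 1))

/-- Vertex boundary: vertices outside `S` adjacent to some vertex of `S`. -/
def vertexBoundary {V : Type*} (G : SimpleGraph V) (S : Set V) : Set V :=
  {v | v ∉ S ∧ ∃ u ∈ S, G.Adj u v}

open Finset
open scoped symmDiff
variable {n : ℕ}
abbrev Vv (n : ℕ) := Fin n → Bool
def Df (x y : Vv n) : Finset (Fin n) := {i | x i ≠ y i}
lemma ham_eq (x y : Vv n) : hammingDist x y = (Df x y).card := rfl
lemma Df_symm (x y : Vv n) : Df x y = Df y x := by
  ext i; simp [Df, ne_comm]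
lemma Df_tri (x y z : Vv n) : Df x y = Df x z ∆ Df z y := by
  ext i
  simp only [Df, Finset.mem_symmDiff, mem_filter, mem_univ, true_and]
  cases h1 : x i <;> cases h2 : y i <;> cases h3 : z i <;> simp
def flipc (i : Fin n) (x : Vv n) : Vv n := Function.update x i (!x i)
lemma Df_flip (x : Vv n) (i : Fin n) : Df x (flipc i x) = {i} := by
  ext j
  simp only [Df, mem_filter, mem_univ, true_and, mem_singleton]
  rcases eq_or_ne j i with rfl | h
  · simp [flipc]
  · simp [flipc, Function.update_of_ne h, h]

lemma flip_ne (x : Vv n) (i : Fin n) : flipc i x ≠ x := by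
  intro h
  have := congrFun h i
  simp [flipc] at this
lemma ham_one_iff (x y : Vv n) : hammingDist x y = 1 ↔ ∃ i, y = flipc i x := by
  constructor
  · intro h
    rw [ham_eq, Finset.card_eq_one] at h
    obtain ⟨i, hi⟩ := h
    refine ⟨i, funext fun j => ?_⟩
    rcases eq_or_ne j i with rfl | hj
    · have : j ∈ Df x y := hi ▸ mem_singleton_self j
      simp only [Df, mem_filter, mem_univ, true_and] at this
      simp only [flipc, Function.update_self]
      cases h1 : x j <;> cases h2 : y j <;> simp_all
    · have : j ∉ Df x y := by rw [hi]; simp [hj]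
      simp only [Df, mem_filter, mem_univ, true_and, not_not] at this
      simp [flipc, Function.update_of_ne hj, this]
  · rintro ⟨i, rfl⟩
    rw [ham_eq, Df_flip]; simp
def Nf (x : Vv n) : Finset (Vv n) := Finset.image (fun i => flipc i x) Finset.univ
lemma mem_Nf {x z : Vv n} : z ∈ Nf x ↔ hammingDist x z = 1 := by
  rw [Nf, ham_one_iff]
  simp only [mem_image, mem_univ, true_and]
  exact exists_congr fun i => eq_comm
lemma card_Nf (x : Vv n) : (Nf x).card = n := by
  rw [Nf, Finset.card_image_of_injective _ ?_, card_univ, Fintype.card_fin]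
  intro i j h
  by_contra hij
  have h1 : flipc i x i = flipc j x i := congrFun h i
  simp only [flipc] at h1
  rw [Function.update_self, Function.update_of_ne hij] at h1
  simp at h1
lemma ne_of_mem_Nf {x z : Vv n} (h : z ∈ Nf x) : z ≠ x := by
  rw [mem_Nf] at h; intro e; subst e; simp [hammingDist_self] at h
lemma key {x y z : Vv n} (hx : z ∈ Nf x) (hy : z ∈ Nf y) (hxy : x ≠ y) :
    ∃ i j, i ≠ j ∧ Df x y = {i, j} ∧ z = flipc i x := by
  rw [mem_Nf, ham_one_iff] at hx hy
  obtain ⟨i, rfl⟩ := hx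
  obtain ⟨j, hj⟩ := hy
  have hij : i ≠ j := by
    rintro rfl
    apply hxy
    have := congrFun hj i
    funext k
    rcases eq_or_ne k i with rfl | hk
    · have := congrFun hj k
      simp only [flipc, Function.update_self] at this
      cases h1 : x k <;> cases h2 : y k <;> simp_all
    · have := congrFun hj k
      simpa [flipc, Function.update_of_ne hk] using this
  refine ⟨i, j, hij, ?_, rfl⟩
  have h2 : Df (flipc i x) y = {j} := by rw [hj, Df_symm, Df_flip]
  have this : Df x y = Df x (flipc i x) ∆ Df (flipc i x) y := Df_tri ..
  rw [Df_flip, h2] at this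
  rw [this]
  ext k
  simp only [Finset.mem_symmDiff, mem_singleton, mem_insert]
  constructor
  · rintro (⟨rfl, h⟩ | ⟨rfl, h⟩) <;> tauto
  · rintro (rfl | rfl)
    · exact Or.inl ⟨rfl, hij⟩
    · exact Or.inr ⟨rfl, Ne.symm hij⟩
lemma ham_two_of_common {x y z : Vv n} (hx : z ∈ Nf x) (hy : z ∈ Nf y) (hxy : x ≠ y) :
    hammingDist x y = 2 := by
  obtain ⟨i, j, hij, hD, -⟩ := key hx hy hxy
  rw [ham_eq, hD, card_insert_of_notMem (by simpa using hij), card_singleton]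
lemma NN_subset {x y : Vv n} (hxy : x ≠ y) :
    Nf x ∩ Nf y ⊆ Finset.image (fun i => flipc i x) (Df x y) := by
  intro z hz
  rw [mem_inter] at hz
  obtain ⟨i, j, hij, hD, rfl⟩ := key hz.1 hz.2 hxy
  exact mem_image.2 ⟨i, by simp [hD], rfl⟩
lemma NN_card {x y : Vv n} (hxy : x ≠ y) : (Nf x ∩ Nf y).card ≤ 2 := by
  rcases (Nf x ∩ Nf y).eq_empty_or_nonempty with h | ⟨z, hz⟩
  · simp [h]
  · rw [mem_inter] at hz
    obtain ⟨i, j, hij, hD, -⟩ := key hz.1 hz.2 hxy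
    calc (Nf x ∩ Nf y).card ≤ (Finset.image (fun i => flipc i x) (Df x y)).card :=
          card_le_card (NN_subset hxy)
      _ ≤ (Df x y).card := card_image_le
      _ ≤ 2 := by rw [hD]; exact (card_insert_le _ _).trans (by simp)
lemma NN_empty {x y : Vv n} (hxy : x ≠ y) (h2 : hammingDist x y ≠ 2) :
    Nf x ∩ Nf y = ∅ := by
  rcases (Nf x ∩ Nf y).eq_empty_or_nonempty with h | ⟨z, hz⟩
  · exact h
  · rw [mem_inter] at hz
    exact absurd (ham_two_of_common hz.1 hz.2 hxy) h2

lemma symmDiff_singleton_mem {s : Finset (Fin n)} {i : Fin n} (h : i ∈ s) :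
    ({i} : Finset (Fin n)) ∆ s = s.erase i := by
  ext k
  simp only [Finset.mem_symmDiff, mem_singleton, mem_erase]
  constructor
  · rintro (⟨rfl, hk⟩ | ⟨hk, hki⟩)
    · exact absurd h hk
    · exact ⟨hki, hk⟩
  · rintro ⟨hki, hk⟩
    exact Or.inr ⟨hk, fun e => hki e⟩
lemma symmDiff_singleton_not_mem {s : Finset (Fin n)} {i : Fin n} (h : i ∉ s) :
    ({i} : Finset (Fin n)) ∆ s = insert i s := by
  ext k
  simp only [Finset.mem_symmDiff, mem_singleton, mem_insert]
  constructor
  · rintro (⟨rfl, hk⟩ | ⟨hk, hki⟩) <;> tauto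
  · rintro (rfl | hk)
    · exact Or.inl ⟨rfl, h⟩
    · exact Or.inr ⟨hk, fun e => h (e ▸ hk)⟩
lemma S4 {x y z : Vv n} (h1 : hammingDist x y = 1) (h2 : hammingDist x z = 1)
    (hyz : y ≠ z) : hammingDist y z = 2 := by
  rw [ham_one_iff] at h1 h2
  obtain ⟨i, rfl⟩ := h1
  obtain ⟨j, rfl⟩ := h2
  have hij : i ≠ j := fun e => hyz (e ▸ rfl)
  have h3 : Df (flipc i x) (flipc j x) = ({i} : Finset (Fin n)) ∆ {j} := by
    rw [Df_tri (flipc i x) (flipc j x) x, Df_symm (flipc i x) x, Df_flip, Df_flip]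
  rw [ham_eq, h3, symmDiff_singleton_not_mem (by simpa using hij)]
  rw [card_insert_of_notMem (by simpa using hij), card_singleton]
lemma S5 {x y z : Vv n} (h1 : hammingDist x y = 1) (h2 : hammingDist x z = 2) :
    hammingDist y z ≠ 2 := by
  rw [ham_one_iff] at h1
  obtain ⟨i, rfl⟩ := h1
  have h3 : Df (flipc i x) z = ({i} : Finset (Fin n)) ∆ Df x z := by
    rw [Df_tri (flipc i x) z x, Df_symm (flipc i x) x, Df_flip]
  rw [ham_eq, h3]
  by_cases hi : i ∈ Df x z
  · rw [symmDiff_singleton_mem hi, card_erase_of_mem hi, ← ham_eq, h2]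
    simp
  · rw [symmDiff_singleton_not_mem hi, card_insert_of_notMem hi, ← ham_eq, h2]
    simp
lemma triple {a b c : Vv n} (hab : hammingDist a b = 2) (hac : hammingDist a c = 2)
    (hbc : hammingDist b c = 2) : ∃ z, z ∈ Nf a ∧ z ∈ Nf b ∧ z ∈ Nf c := by
  have hne : (Df a b ∩ Df a c).Nonempty := by
    by_contra h
    rw [not_nonempty_iff_eq_empty, ← disjoint_iff_inter_eq_empty] at h
    have h3 : Df b c = Df a b ∆ Df a c := by
      rw [Df_tri b c a, Df_symm b a]
    rw [h.symmDiff_eq_sup] at h3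
    have : (Df b c).card = 4 := by
      rw [h3]
      have := card_union_of_disjoint h
      rw [sup_eq_union, this, ← ham_eq, ← ham_eq, hab, hac]
    rw [← ham_eq, hbc] at this
    omega
  obtain ⟨t, ht⟩ := hne
  rw [mem_inter] at ht
  refine ⟨flipc t a, mem_Nf.2 ?_, mem_Nf.2 ?_, mem_Nf.2 ?_⟩
  · rw [ham_eq, Df_flip]; simp
  · have h3 : Df b (flipc t a) = Df a b ∆ ({t} : Finset (Fin n)) := by
      rw [Df_tri b (flipc t a) a, Df_symm b a, Df_flip]
    rw [ham_eq, h3, symmDiff_comm, symmDiff_singleton_mem ht.1,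
      card_erase_of_mem ht.1, ← ham_eq, hab]
  · have h3 : Df c (flipc t a) = Df a c ∆ ({t} : Finset (Fin n)) := by
      rw [Df_tri c (flipc t a) a, Df_symm c a, Df_flip]
    rw [ham_eq, h3, symmDiff_comm, symmDiff_singleton_mem ht.2,
      card_erase_of_mem ht.2, ← ham_eq, hac]

lemma NS_subset (x : Vv n) (T : Finset (Vv n)) : Nf x ∩ T ⊆ T.erase x :=
  fun v hv => mem_erase.2 ⟨ne_of_mem_Nf (mem_inter.1 hv).1, (mem_inter.1 hv).2⟩
lemma NS_le_one {x u v : Vv n} (h : hammingDist x v ≠ 1) :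
    (Nf x ∩ {x, u, v}).card ≤ 1 := by
  have : Nf x ∩ {x, u, v} ⊆ {u} := by
    intro w hw
    rw [mem_inter] at hw
    have h1 := ne_of_mem_Nf hw.1
    have h2 : hammingDist x w = 1 := mem_Nf.1 hw.1
    simp only [mem_insert, mem_singleton] at hw ⊢
    rcases hw.2 with rfl | rfl | rfl
    · exact absurd rfl h1
    · rfl
    · exact absurd h2 h
  exact (card_le_card this).trans (by simp)
lemma NS_le_zero {x u v : Vv n} (hu : hammingDist x u ≠ 1) (hv : hammingDist x v ≠ 1) :
    (Nf x ∩ {x, u, v}).card = 0 := by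
  rw [card_eq_zero, eq_empty_iff_forall_notMem]
  intro w hw
  rw [mem_inter] at hw
  have h1 := ne_of_mem_Nf hw.1
  have h2 : hammingDist x w = 1 := mem_Nf.1 hw.1
  simp only [mem_insert, mem_singleton] at hw
  rcases hw.2 with rfl | rfl | rfl
  · exact h1 rfl
  · exact hu h2
  · exact hv h2
lemma NS_le_two {x u v : Vv n} : (Nf x ∩ {x, u, v}).card ≤ 2 := by
  have : Nf x ∩ {x, u, v} ⊆ {u, v} := by
    intro w hw
    rw [mem_inter] at hw
    have h1 := ne_of_mem_Nf hw.1
    simp only [mem_insert, mem_singleton] at hw ⊢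
    rcases hw.2 with rfl | rfl | rfl
    · exact absurd rfl h1
    · tauto
    · tauto
  exact (card_le_card this).trans ((card_insert_le _ _).trans (by simp))
lemma NN_sdiff_le_one {x y w : Vv n} {T : Finset (Vv n)} (hxy : x ≠ y)
    (hw : w ∈ Nf x ∩ Nf y) (hwT : w ∈ T) : ((Nf x ∩ Nf y) \ T).card ≤ 1 := by
  have hsub : (Nf x ∩ Nf y) \ T ⊆ (Nf x ∩ Nf y).erase w := by
    intro v hv
    rw [mem_sdiff] at hv
    exact mem_erase.2 ⟨fun e => hv.2 (e ▸ hwT), hv.1⟩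
  calc ((Nf x ∩ Nf y) \ T).card ≤ ((Nf x ∩ Nf y).erase w).card := card_le_card hsub
    _ = (Nf x ∩ Nf y).card - 1 := card_erase_of_mem hw
    _ ≤ 1 := by have := NN_card hxy; omega
lemma NN_sdiff_le_two {x y : Vv n} (hxy : x ≠ y) (T : Finset (Vv n)) :
    ((Nf x ∩ Nf y) \ T).card ≤ 2 :=
  (card_le_card sdiff_subset).trans (NN_card hxy)
lemma NN_sdiff_zero {x y : Vv n} (hxy : x ≠ y) (h2 : hammingDist x y ≠ 2)
    (T : Finset (Vv n)) : ((Nf x ∩ Nf y) \ T).card = 0 := by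
  rw [NN_empty hxy h2]; simp

section Main
open Finset
variable {n : ℕ}

set_option maxHeartbeats 1000000 in
theorem boundary_of_triple (n : ℕ) (hn : 3 ≤ n)
    (S : Set (Fin n → Bool)) (hS : S.ncard = 3) :
    3 * n - 5 ≤ (vertexBoundary (Qn n) S).ncard := by
  classical
  obtain ⟨a, b, c, hab, hac, hbc, rfl⟩ := Set.ncard_eq_three.mp hS
  set Sf : Finset (Vv n) := {a, b, c} with hSf
  have hadj : ∀ u v : Vv n, (Qn n).Adj u v ↔ hammingDist u v = 1 := fun _ _ => Iff.rfl
  have hSetFin : ∀ v : Vv n, v ∈ ({a, b, c} : Set (Vv n)) ↔ v ∈ Sf := by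
    intro v
    simp [hSf, Set.mem_insert_iff]
  have hbd : vertexBoundary (Qn n) {a, b, c}
      = (((Nf a ∪ Nf b ∪ Nf c) \ Sf : Finset (Vv n)) : Set (Vv n)) := by
    ext v
    constructor
    · rintro ⟨hv, u, hu, huv⟩
      rw [Finset.mem_coe, mem_sdiff]
      constructor
      · rw [mem_union, mem_union]
        have hv' := mem_Nf.2 ((hadj u v).1 huv)
        simp only [Set.mem_insert_iff, Set.mem_singleton_iff] at hu
        rcases hu with rfl | rfl | rfl
        · exact Or.inl (Or.inl hv')
        · exact Or.inl (Or.inr hv')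
        · exact Or.inr hv'
      · intro hvS
        exact hv ((hSetFin v).2 hvS)
    · intro hv
      rw [Finset.mem_coe, mem_sdiff, mem_union, mem_union] at hv
      obtain ⟨hvN, hvS⟩ := hv
      constructor
      · intro h
        exact hvS ((hSetFin v).1 h)
      · rcases hvN with (h | h) | h
        · exact ⟨a, by simp, (hadj a v).2 (mem_Nf.1 h)⟩
        · exact ⟨b, by simp, (hadj b v).2 (mem_Nf.1 h)⟩
        · exact ⟨c, by simp, (hadj c v).2 (mem_Nf.1 h)⟩
  rw [hbd, Set.ncard_coe_finset]
  -- decomposition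
  have hXB : (Nf a \ Sf) ∪ ((Nf b \ Sf) \ Nf a) ∪ ((Nf c \ Sf) \ (Nf a ∪ Nf b))
      ⊆ (Nf a ∪ Nf b ∪ Nf c) \ Sf := by
    intro v hv
    rw [mem_union, mem_union] at hv
    rw [mem_sdiff, mem_union, mem_union]
    rcases hv with (h | h) | h
    · rw [mem_sdiff] at h; exact ⟨Or.inl (Or.inl h.1), h.2⟩
    · rw [mem_sdiff, mem_sdiff] at h; exact ⟨Or.inl (Or.inr h.1.1), h.1.2⟩
    · rw [mem_sdiff, mem_sdiff] at h; exact ⟨Or.inr h.1.1, h.1.2⟩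
  have hdXY : Disjoint (Nf a \ Sf) ((Nf b \ Sf) \ Nf a) := by
    rw [disjoint_left]
    intro v hv hv'
    simp only [mem_sdiff] at hv hv'
    exact hv'.2 hv.1
  have hdXZ : Disjoint (Nf a \ Sf) ((Nf c \ Sf) \ (Nf a ∪ Nf b)) := by
    rw [disjoint_left]
    intro v hv hv'
    simp only [mem_sdiff, mem_union] at hv hv'
    exact hv'.2 (Or.inl hv.1)
  have hdYZ : Disjoint ((Nf b \ Sf) \ Nf a) ((Nf c \ Sf) \ (Nf a ∪ Nf b)) := by
    rw [disjoint_left]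
    intro v hv hv'
    simp only [mem_sdiff, mem_union] at hv hv'
    exact hv'.2 (Or.inr hv.1.1)
  have hcard : (Nf a \ Sf).card + ((Nf b \ Sf) \ Nf a).card
      + ((Nf c \ Sf) \ (Nf a ∪ Nf b)).card ≤ ((Nf a ∪ Nf b ∪ Nf c) \ Sf).card := by
    rw [← card_union_of_disjoint hdXY, ← card_union_of_disjoint
      (by rw [disjoint_union_left]; exact ⟨hdXZ, hdYZ⟩)]
    exact card_le_card hXB
  have e1 : (Nf a \ Sf).card + (Nf a ∩ Sf).card = n := by
    rw [card_sdiff_add_card_inter, card_Nf]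
  have e2 : ((Nf b \ Sf) \ Nf a).card + ((Nf b \ Sf) ∩ Nf a).card + (Nf b ∩ Sf).card = n := by
    rw [card_sdiff_add_card_inter, card_sdiff_add_card_inter, card_Nf]
  have e3 : ((Nf c \ Sf) \ (Nf a ∪ Nf b)).card + ((Nf c \ Sf) ∩ (Nf a ∪ Nf b)).card
      + (Nf c ∩ Sf).card = n := by
    rw [card_sdiff_add_card_inter, card_sdiff_add_card_inter, card_Nf]
  have hQq : ((Nf b \ Sf) ∩ Nf a).card ≤ ((Nf a ∩ Nf b) \ Sf).card := by
    refine card_le_card ?_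
    intro v hv
    rw [mem_inter, mem_sdiff] at hv
    rw [mem_sdiff, mem_inter]
    exact ⟨⟨hv.2, hv.1.1⟩, hv.1.2⟩
  have hWrs : ((Nf c \ Sf) ∩ (Nf a ∪ Nf b)).card
      ≤ ((Nf a ∩ Nf c) \ Sf).card + ((Nf b ∩ Nf c) \ Sf).card := by
    refine le_trans (card_le_card ?_) (card_union_le _ _)
    intro v hv
    rw [mem_inter, mem_sdiff, mem_union] at hv
    rw [mem_union, mem_sdiff, mem_sdiff, mem_inter, mem_inter]
    rcases hv.1, hv.2 with ⟨⟨hc, hS⟩, ha | hb⟩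
    · exact Or.inl ⟨⟨ha, hc⟩, hS⟩
    · exact Or.inr ⟨⟨hb, hc⟩, hS⟩
  -- useful permutations of Sf
  have hSb : Sf = {b, a, c} := by rw [hSf, Finset.insert_comm a b]
  have hSb' : Sf = {b, c, a} := by
    rw [hSf, Finset.insert_comm a b, Finset.pair_comm a c]
  have hSc : Sf = {c, a, b} := by
    rw [hSf, Finset.pair_comm b c, Finset.insert_comm a c]
  have hSc' : Sf = {c, b, a} := by
    rw [hSf, Finset.insert_comm a b, Finset.pair_comm a c, Finset.insert_comm b c]
  have hSa' : Sf = {a, c, b} := by rw [hSf, Finset.pair_comm b c]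
  have haSf : a ∈ Sf := hSf ▸ mem_insert_self a {b, c}
  have hbSf : b ∈ Sf := hSf ▸ mem_insert_of_mem (mem_insert_self b {c})
  have hcSf : c ∈ Sf := hSf ▸ mem_insert_of_mem (mem_insert_of_mem (mem_singleton_self c))
  by_cases h1 : hammingDist a b = 1
  · by_cases h2 : hammingDist a c = 1
    · -- both ab, ac adjacent; bc at distance 2
      have h3 : hammingDist b c = 2 := S4 h1 h2 hbc
      have hpa : (Nf a ∩ Sf).card ≤ 2 := hSf ▸ NS_le_two
      have hpb : (Nf b ∩ Sf).card ≤ 1 := hSb ▸ NS_le_one (by omega)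
      have hpc : (Nf c ∩ Sf).card ≤ 1 := hSc ▸ NS_le_one
        (by rw [hammingDist_comm]; omega)
      have hq : ((Nf a ∩ Nf b) \ Sf).card = 0 := NN_sdiff_zero hab (by omega) Sf
      have hr : ((Nf a ∩ Nf c) \ Sf).card = 0 := NN_sdiff_zero hac (by omega) Sf
      have hs : ((Nf b ∩ Nf c) \ Sf).card ≤ 1 := by
        refine NN_sdiff_le_one hbc (mem_inter.2 ⟨?_, ?_⟩) haSf
        · exact mem_Nf.2 (by rw [hammingDist_comm]; exact h1)
        · exact mem_Nf.2 (by rw [hammingDist_comm]; exact h2)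
      omega
    · by_cases h3 : hammingDist b c = 1
      · -- ab, bc adjacent; ac at distance 2
        have h2' : hammingDist a c = 2 :=
          S4 (x := b) (by rw [hammingDist_comm]; exact h1) h3 hac
        have hpa : (Nf a ∩ Sf).card ≤ 1 := hSf ▸ NS_le_one h2
        have hpb : (Nf b ∩ Sf).card ≤ 2 := hSb ▸ NS_le_two
        have hpc : (Nf c ∩ Sf).card ≤ 1 := hSc' ▸ NS_le_one
          (by rw [hammingDist_comm]; omega)
        have hq : ((Nf a ∩ Nf b) \ Sf).card = 0 := NN_sdiff_zero hab (by omega) Sf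
        have hs : ((Nf b ∩ Nf c) \ Sf).card = 0 := NN_sdiff_zero hbc (by omega) Sf
        have hr : ((Nf a ∩ Nf c) \ Sf).card ≤ 1 := by
          refine NN_sdiff_le_one hac (mem_inter.2 ⟨?_, ?_⟩) hbSf
          · exact mem_Nf.2 h1
          · exact mem_Nf.2 (by rw [hammingDist_comm]; exact h3)
        omega
      · -- only ab adjacent
        have hpa : (Nf a ∩ Sf).card ≤ 1 := hSf ▸ NS_le_one h2
        have hpb : (Nf b ∩ Sf).card ≤ 1 := hSb ▸ NS_le_one h3
        have hpc : (Nf c ∩ Sf).card = 0 := hSc ▸ NS_le_zero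
          (by rw [hammingDist_comm]; exact h2) (by rw [hammingDist_comm]; exact h3)
        have hq : ((Nf a ∩ Nf b) \ Sf).card = 0 := NN_sdiff_zero hab (by omega) Sf
        by_cases h2' : hammingDist a c = 2
        · have h3' : hammingDist b c ≠ 2 := S5 h1 h2'
          have hs : ((Nf b ∩ Nf c) \ Sf).card = 0 := NN_sdiff_zero hbc h3' Sf
          have hr : ((Nf a ∩ Nf c) \ Sf).card ≤ 2 := NN_sdiff_le_two hac Sf
          omega
        · have hr : ((Nf a ∩ Nf c) \ Sf).card = 0 := NN_sdiff_zero hac h2' Sf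
          have hs : ((Nf b ∩ Nf c) \ Sf).card ≤ 2 := NN_sdiff_le_two hbc Sf
          omega
  · by_cases h2 : hammingDist a c = 1
    · by_cases h3 : hammingDist b c = 1
      · -- ac, bc adjacent; ab at distance 2
        have h1' : hammingDist a b = 2 :=
          S4 (x := c) (by rw [hammingDist_comm]; exact h2)
            (by rw [hammingDist_comm]; exact h3) hab
        have hpa : (Nf a ∩ Sf).card ≤ 1 := hSa' ▸ NS_le_one (by omega)
        have hpb : (Nf b ∩ Sf).card ≤ 1 := hSb' ▸ NS_le_one
          (by rw [hammingDist_comm]; omega)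
        have hpc : (Nf c ∩ Sf).card ≤ 2 := hSc ▸ NS_le_two
        have hr : ((Nf a ∩ Nf c) \ Sf).card = 0 := NN_sdiff_zero hac (by omega) Sf
        have hs : ((Nf b ∩ Nf c) \ Sf).card = 0 := NN_sdiff_zero hbc (by omega) Sf
        have hq : ((Nf a ∩ Nf b) \ Sf).card ≤ 1 := by
          refine NN_sdiff_le_one hab (mem_inter.2 ⟨?_, ?_⟩) hcSf
          · exact mem_Nf.2 h2
          · exact mem_Nf.2 h3
        omega
      · -- only ac adjacent
        have hpa : (Nf a ∩ Sf).card ≤ 1 := hSa' ▸ NS_le_one h1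
        have hpb : (Nf b ∩ Sf).card = 0 := hSb ▸ NS_le_zero
          (by rw [hammingDist_comm]; exact h1) h3
        have hpc : (Nf c ∩ Sf).card ≤ 1 := hSc ▸ NS_le_one
          (by rw [hammingDist_comm]; exact h3)
        have hr : ((Nf a ∩ Nf c) \ Sf).card = 0 := NN_sdiff_zero hac (by omega) Sf
        by_cases h1' : hammingDist a b = 2
        · have h3' : hammingDist b c ≠ 2 := by
            have := S5 (x := a) (y := c) (z := b) h2 h1'
            rwa [hammingDist_comm] at this
          have hs : ((Nf b ∩ Nf c) \ Sf).card = 0 := NN_sdiff_zero hbc h3' Sf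
          have hq : ((Nf a ∩ Nf b) \ Sf).card ≤ 2 := NN_sdiff_le_two hab Sf
          omega
        · have hq : ((Nf a ∩ Nf b) \ Sf).card = 0 := NN_sdiff_zero hab h1' Sf
          have hs : ((Nf b ∩ Nf c) \ Sf).card ≤ 2 := NN_sdiff_le_two hbc Sf
          omega
    · by_cases h3 : hammingDist b c = 1
      · -- only bc adjacent
        have hpa : (Nf a ∩ Sf).card = 0 := hSf ▸ NS_le_zero h1 h2
        have hpb : (Nf b ∩ Sf).card ≤ 1 := hSb' ▸ NS_le_one
          (by rw [hammingDist_comm]; exact h1)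
        have hpc : (Nf c ∩ Sf).card ≤ 1 := hSc' ▸ NS_le_one
          (by rw [hammingDist_comm]; exact h2)
        have hs : ((Nf b ∩ Nf c) \ Sf).card = 0 := NN_sdiff_zero hbc (by omega) Sf
        by_cases h1' : hammingDist a b = 2
        · have h2' : hammingDist a c ≠ 2 := by
            have := S5 (x := b) (y := c) (z := a)
              h3 (by rw [hammingDist_comm]; exact h1')
            rw [hammingDist_comm] at this
            omega
          have hr : ((Nf a ∩ Nf c) \ Sf).card = 0 := NN_sdiff_zero hac h2' Sf
          have hq : ((Nf a ∩ Nf b) \ Sf).card ≤ 2 := NN_sdiff_le_two hab Sf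
          omega
        · have hq : ((Nf a ∩ Nf b) \ Sf).card = 0 := NN_sdiff_zero hab h1' Sf
          have hr : ((Nf a ∩ Nf c) \ Sf).card ≤ 2 := NN_sdiff_le_two hac Sf
          omega
      · -- no adjacent pairs
        have hpa : (Nf a ∩ Sf).card = 0 := hSf ▸ NS_le_zero h1 h2
        have hpb : (Nf b ∩ Sf).card = 0 := hSb ▸ NS_le_zero
          (by rw [hammingDist_comm]; exact h1) h3
        have hpc : (Nf c ∩ Sf).card = 0 := hSc ▸ NS_le_zero
          (by rw [hammingDist_comm]; exact h2) (by rw [hammingDist_comm]; exact h3)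
        by_cases g1 : hammingDist a b = 2
        · by_cases g2 : hammingDist a c = 2
          · by_cases g3 : hammingDist b c = 2
            · -- all three at distance 2 : use the common neighbor
              obtain ⟨z, hza, hzb, hzc⟩ := triple g1 g2 g3
              have hzS : z ∉ Sf := by
                simp only [hSf, mem_insert, mem_singleton]
                push_neg
                exact ⟨ne_of_mem_Nf hza, ne_of_mem_Nf hzb, ne_of_mem_Nf hzc⟩
              have hq : ((Nf a ∩ Nf b) \ Sf).card ≤ 2 := NN_sdiff_le_two hab Sf
              have hWv : ((Nf c \ Sf) ∩ (Nf a ∪ Nf b)).card ≤ 3 := by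
                have hU : (Nf c \ Sf) ∩ (Nf a ∪ Nf b)
                    = ((Nf c \ Sf) ∩ Nf a) ∪ ((Nf c \ Sf) ∩ Nf b) := by
                  ext v
                  rw [mem_union, mem_inter, mem_inter, mem_inter, mem_union]
                  constructor
                  · rintro ⟨hc, ha | hb⟩
                    · exact Or.inl ⟨hc, ha⟩
                    · exact Or.inr ⟨hc, hb⟩
                  · rintro (⟨hc, ha⟩ | ⟨hc, hb⟩)
                    · exact ⟨hc, Or.inl ha⟩
                    · exact ⟨hc, Or.inr hb⟩
                have h1c : ((Nf c \ Sf) ∩ Nf a).card ≤ 2 := by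
                  refine le_trans (card_le_card ?_) (NN_card (Ne.symm hac))
                  intro v hv
                  rw [mem_inter, mem_sdiff] at hv
                  exact mem_inter.2 ⟨hv.1.1, hv.2⟩
                have h2c : ((Nf c \ Sf) ∩ Nf b).card ≤ 2 := by
                  refine le_trans (card_le_card ?_) (NN_card (Ne.symm hbc))
                  intro v hv
                  rw [mem_inter, mem_sdiff] at hv
                  exact mem_inter.2 ⟨hv.1.1, hv.2⟩
                have hint : z ∈ ((Nf c \ Sf) ∩ Nf a) ∩ ((Nf c \ Sf) ∩ Nf b) := by
                  simp only [mem_inter, mem_sdiff]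
                  exact ⟨⟨⟨hzc, hzS⟩, hza⟩, ⟨⟨hzc, hzS⟩, hzb⟩⟩
                have hcui := card_union_add_card_inter ((Nf c \ Sf) ∩ Nf a)
                  ((Nf c \ Sf) ∩ Nf b)
                have hge1 : 1 ≤ (((Nf c \ Sf) ∩ Nf a) ∩ ((Nf c \ Sf) ∩ Nf b)).card :=
                  card_pos.2 ⟨z, hint⟩
                rw [hU]
                omega
              omega
            · have hs : ((Nf b ∩ Nf c) \ Sf).card = 0 := NN_sdiff_zero hbc g3 Sf
              have hq : ((Nf a ∩ Nf b) \ Sf).card ≤ 2 := NN_sdiff_le_two hab Sf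
              have hr : ((Nf a ∩ Nf c) \ Sf).card ≤ 2 := NN_sdiff_le_two hac Sf
              omega
          · have hr : ((Nf a ∩ Nf c) \ Sf).card = 0 := NN_sdiff_zero hac g2 Sf
            have hq : ((Nf a ∩ Nf b) \ Sf).card ≤ 2 := NN_sdiff_le_two hab Sf
            have hs : ((Nf b ∩ Nf c) \ Sf).card ≤ 2 := NN_sdiff_le_two hbc Sf
            omega
        · have hq : ((Nf a ∩ Nf b) \ Sf).card = 0 := NN_sdiff_zero hab g1 Sf
          have hr : ((Nf a ∩ Nf c) \ Sf).card ≤ 2 := NN_sdiff_le_two hac Sf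
          have hs : ((Nf b ∩ Nf c) \ Sf).card ≤ 2 := NN_sdiff_le_two hbc Sf
          omega
end Main
end

section
/- Let n ≥ 3 and 1 ≤ h ≤ n − 1. Suppose F_e ⊆ E(Q_n) with |F_e| ≤ h and F₁, F₂ ⊆ V(Q_n) with |F₁|, |F₂| ≤ n − h and |F₁ Δ F₂| = 2. Then there is an edge of Q_n − F_e between V − (F₁ ∪ F₂) and F₁ Δ F₂. -/
open Finset

section Helpers
variable {n : ℕ}

def Dif (x y : Fin n → Bool) : Finset (Fin n) := {i | x i ≠ y i}

lemma hd_eq (x y : Fin n → Bool) : hammingDist x y = (Dif x y).card := rfl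

lemma Dif_symmDiff (x y z : Fin n → Bool) : Dif x z = symmDiff (Dif x y) (Dif y z) := by
  ext i
  simp only [Dif, Finset.mem_symmDiff, Finset.mem_filter, Finset.mem_univ, true_and]
  rcases Bool.dichotomy (x i) with h1 | h1 <;> rcases Bool.dichotomy (y i) with h2 | h2 <;>
    rcases Bool.dichotomy (z i) with h3 | h3 <;> simp [h1, h2, h3]

def flp (u : Fin n → Bool) (i : Fin n) : Fin n → Bool := Function.update u i (!u i)

lemma Dif_flip (u : Fin n → Bool) (i : Fin n) : Dif (flp u i) u = {i} := by
  ext j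
  simp only [Dif, Finset.mem_filter, Finset.mem_univ, true_and, Finset.mem_singleton]; simp only [flp]
  rcases eq_or_ne j i with rfl | hne
  · simp
  · simp [Function.update_of_ne hne, hne]

lemma adj_iff_flip (x u : Fin n → Bool) : (Qn n).Adj x u ↔ ∃ i, x = flp u i := by
  constructor
  · intro hadj
    have : (Dif x u).card = 1 := hadj
    obtain ⟨i, hi⟩ := Finset.card_eq_one.mp this
    refine ⟨i, funext fun j => ?_⟩
    rcases eq_or_ne j i with rfl | hne
    · have : j ∈ Dif x u := hi ▸ Finset.mem_singleton_self j
      simp only [Dif, Finset.mem_filter] at this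
      simp only [flp, Function.update_self]
      rcases Bool.dichotomy (u j) with h | h <;> simp [h] at this ⊢ <;> exact this
    · have : j ∉ Dif x u := by rw [hi]; simp [hne]
      simp only [Dif, Finset.mem_filter, Finset.mem_univ, true_and, not_not] at this
      simp [flp, Function.update_of_ne hne, this]
  · rintro ⟨i, rfl⟩
    show hammingDist _ _ = 1
    rw [hd_eq, Dif_flip]
    simp

lemma Dif_comm (x y : Fin n → Bool) : Dif x y = Dif y x := by
  ext i; simp [Dif, ne_comm]

lemma Dif_eq_empty {x y : Fin n → Bool} (h : Dif x y = ∅) : x = y := by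
  funext i
  by_contra hne
  have : i ∈ Dif x y := by simp [Dif, hne]
  simp [h] at this

lemma flp_inj (u : Fin n → Bool) : Function.Injective (flp u) := by
  intro i j hij
  have h1 : Dif (flp u i) u = {i} := Dif_flip u i
  have h2 : Dif (flp u j) u = {j} := Dif_flip u j
  rw [hij, h2] at h1
  exact (Finset.singleton_injective h1).symm

def Nb (u : Fin n → Bool) : Finset (Fin n → Bool) := univ.image (flp u)

lemma mem_Nb {x u : Fin n → Bool} : x ∈ Nb u ↔ (Qn n).Adj x u := by
  simp only [Nb, Finset.mem_image, Finset.mem_univ, true_and, adj_iff_flip]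
  exact ⟨fun ⟨i, h⟩ => ⟨i, h.symm⟩, fun ⟨i, h⟩ => ⟨i, h.symm⟩⟩

lemma card_Nb (u : Fin n → Bool) : (Nb u).card = n := by
  rw [Nb, Finset.card_image_of_injective _ (flp_inj u)]
  simp

lemma common_nb {x u v : Fin n → Bool} (huv : u ≠ v) (hx : x ∈ Nb u ∩ Nb v) :
    ∃ i j, i ≠ j ∧ x = flp u i ∧ Dif u v = {i, j} := by
  rw [Finset.mem_inter, mem_Nb, mem_Nb, adj_iff_flip, adj_iff_flip] at hx
  obtain ⟨⟨i, hi⟩, ⟨j, hj⟩⟩ := hx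
  have hDxu : Dif u x = {i} := by rw [Dif_comm, hi, Dif_flip]
  have hDxv : Dif x v = {j} := by rw [hj, Dif_flip]
  have hD : Dif u v = symmDiff ({i} : Finset (Fin n)) {j} := by
    rw [← hDxu, ← hDxv, ← Dif_symmDiff]
  rcases eq_or_ne i j with rfl | hne
  · exfalso; apply huv; apply Dif_eq_empty; rw [hD]; simp
  · refine ⟨i, j, hne, hi, ?_⟩
    rw [hD]
    ext k
    simp only [Finset.mem_symmDiff, Finset.mem_singleton, Finset.mem_insert]
    constructor
    · rintro (⟨rfl, _⟩ | ⟨rfl, _⟩) <;> tauto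
    · rintro (rfl | rfl) <;> tauto

lemma inter_card_le {u v : Fin n → Bool} (huv : u ≠ v) : (Nb u ∩ Nb v).card ≤ 2 := by
  rcases Finset.eq_empty_or_nonempty (Nb u ∩ Nb v) with he | ⟨x₀, hx₀⟩
  · simp [he]
  · obtain ⟨i₀, j₀, hne₀, _, hD₀⟩ := common_nb huv hx₀
    have hsub : Nb u ∩ Nb v ⊆ {flp u i₀, flp u j₀} := by
      intro x hx
      obtain ⟨i, j, hne, hxi, hD⟩ := common_nb huv hx
      have hiD : i ∈ Dif u v := by rw [hD]; simp
      rw [hD₀] at hiD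
      simp only [Finset.mem_insert, Finset.mem_singleton] at hiD ⊢
      rcases hiD with rfl | rfl
      · left; exact hxi
      · right; exact hxi
    exact (Finset.card_le_card hsub).trans (by
      exact (Finset.card_insert_le _ _).trans (by simp))

lemma inter_empty_of_adj {u v : Fin n → Bool} (huv : (Qn n).Adj u v) :
    Nb u ∩ Nb v = ∅ := by
  rw [Finset.eq_empty_iff_forall_notMem]
  intro x hx
  obtain ⟨i, j, hne, _, hD⟩ := common_nb huv.ne hx
  have h1 : (Dif u v).card = 1 := huv
  rw [hD, Finset.card_insert_of_notMem (by simp [hne]), Finset.card_singleton] at h1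
  omega

lemma boundary_card (u v : Fin n → Bool) (huv : u ≠ v) :
    2 * n - 2 ≤ (univ.filter fun x => x ≠ u ∧ x ≠ v ∧
      ((Qn n).Adj x u ∨ (Qn n).Adj x v) : Finset (Fin n → Bool)).card := by
  set B := (univ.filter fun x => x ≠ u ∧ x ≠ v ∧
      ((Qn n).Adj x u ∨ (Qn n).Adj x v) : Finset (Fin n → Bool)) with hB
  have hunion : (Nb u ∪ Nb v).card + (Nb u ∩ Nb v).card = n + n := by
    rw [Finset.card_union_add_card_inter, card_Nb, card_Nb]
  by_cases hadj : (Qn n).Adj u v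
  · have hint : Nb u ∩ Nb v = ∅ := inter_empty_of_adj hadj
    have hsub : (Nb u ∪ Nb v) \ {u, v} ⊆ B := by
      intro x hx
      rw [Finset.mem_sdiff, Finset.mem_union, mem_Nb, mem_Nb] at hx
      simp only [Finset.mem_insert, Finset.mem_singleton, not_or] at hx
      simp only [hB, Finset.mem_filter, Finset.mem_univ, true_and]
      exact ⟨hx.2.1, hx.2.2, hx.1⟩
    have h1 := Finset.card_le_card hsub
    have h2 : ((Nb u ∪ Nb v) \ ({u,v} : Finset _)).card + ({u,v} : Finset _).card
        = ((Nb u ∪ Nb v) ∪ {u,v}).card := Finset.card_sdiff_add_card _ _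
    have h3 : (Nb u ∪ Nb v).card ≤ ((Nb u ∪ Nb v) ∪ {u,v}).card :=
      Finset.card_le_card Finset.subset_union_left
    have h4 : ({u,v} : Finset (Fin n → Bool)).card ≤ 2 :=
      (Finset.card_insert_le _ _).trans (by simp)
    have h5 : (Nb u ∩ Nb v).card = 0 := by rw [hint]; simp
    omega
  · have hint : (Nb u ∩ Nb v).card ≤ 2 := inter_card_le huv
    have hsub : Nb u ∪ Nb v ⊆ B := by
      intro x hx
      rw [Finset.mem_union, mem_Nb, mem_Nb] at hx
      have hxu : x ≠ u := by
        rintro rfl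
        rcases hx with h | h
        · exact (Qn n).loopless.irrefl x h
        · exact hadj h
      have hxv : x ≠ v := by
        rintro rfl
        rcases hx with h | h
        · exact hadj ((Qn n).symm.symm _ _ h)
        · exact (Qn n).loopless.irrefl x h
      simp only [hB, Finset.mem_filter, Finset.mem_univ, true_and]
      exact ⟨hxu, hxv, hx⟩
    have h1 := Finset.card_le_card hsub
    omega

end Helpers

theorem distinguishable_symmDiff_two (n h : ℕ) (hn : 3 ≤ n) (hh1 : 1 ≤ h)
    (hhn : h ≤ n - 1) (Fe : Set (Sym2 (Fin n → Bool)))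
    (hFe : Fe ⊆ (Qn n).edgeSet) (hFec : Fe.ncard ≤ h)
    (F₁ F₂ : Set (Fin n → Bool))
    (h1 : F₁.ncard ≤ n - h) (h2 : F₂.ncard ≤ n - h)
    (hΔ : (symmDiff F₁ F₂).ncard = 2) :
    ∃ x, x ∉ F₁ ∪ F₂ ∧ ∃ y ∈ symmDiff F₁ F₂, ((Qn n).deleteEdges Fe).Adj x y := by
  classical
  by_contra hcon
  push_neg at hcon
  obtain ⟨u, v, huv, hS⟩ := Set.ncard_eq_two.mp hΔ
  have hsub_union : symmDiff F₁ F₂ ⊆ F₁ ∪ F₂ := by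
    intro x hx
    rcases hx with ⟨hx1, _⟩ | ⟨hx2, _⟩
    · exact Or.inl hx1
    · exact Or.inr hx2
  have huF : u ∈ F₁ ∪ F₂ := hsub_union (hS ▸ (by simp : u ∈ ({u, v} : Set _)))
  have hvF : v ∈ F₁ ∪ F₂ := hsub_union (hS ▸ (by simp : v ∈ ({u, v} : Set _)))
  set B := (univ.filter fun x => x ≠ u ∧ x ≠ v ∧
      ((Qn n).Adj x u ∨ (Qn n).Adj x v) : Finset (Fin n → Bool)) with hBdef
  have hBcard : 2 * n - 2 ≤ B.card := boundary_card u v huv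
  set G := (univ.filter fun x => x ∉ F₁ ∪ F₂ ∧
      ((Qn n).Adj x u ∨ (Qn n).Adj x v) : Finset (Fin n → Bool)) with hGdef
  set bad := ((F₁ ∪ F₂) \ {u, v}).toFinite.toFinset with hbaddef
  -- B ⊆ G ∪ bad
  have hBsub : B ⊆ G ∪ bad := by
    intro x hx
    simp only [hBdef, Finset.mem_filter, Finset.mem_univ, true_and] at hx
    obtain ⟨hxu, hxv, hadj⟩ := hx
    by_cases hmem : x ∈ F₁ ∪ F₂
    · apply Finset.mem_union_right
      rw [hbaddef, Set.Finite.mem_toFinset]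
      exact ⟨hmem, by simp [hxu, hxv]⟩
    · apply Finset.mem_union_left
      simp only [hGdef, Finset.mem_filter, Finset.mem_univ, true_and]
      exact ⟨hmem, hadj⟩
  -- bad card bound
  have hbadcard : bad.card + 2 ≤ (n - h) + (n - h) := by
    have hfin : (F₁ ∪ F₂).Finite := Set.toFinite _
    have hc : bad.card = ((F₁ ∪ F₂) \ {u, v}).ncard := by
      rw [hbaddef]; exact (Set.ncard_eq_toFinset_card _ _).symm
    have hsub2 : ({u, v} : Set (Fin n → Bool)) ⊆ F₁ ∪ F₂ := by
      intro x hx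
      rcases hx with rfl | rfl
      · exact huF
      · exact hvF
    have hd : ((F₁ ∪ F₂) \ {u, v}).ncard = (F₁ ∪ F₂).ncard - ({u, v} : Set _).ncard :=
      Set.ncard_diff hsub2 (Set.toFinite _)
    have hcuv : ({u, v} : Set (Fin n → Bool)).ncard = 2 := Set.ncard_pair huv
    have hle : (F₁ ∪ F₂).ncard ≤ F₁.ncard + F₂.ncard := Set.ncard_union_le _ _
    have hge : 2 ≤ (F₁ ∪ F₂).ncard := by
      rw [← hcuv]
      exact Set.ncard_le_ncard hsub2 hfin
    omega
  -- G injects into Fe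
  have hGcard : G.card ≤ h := by
    have hinj : G.card ≤ Fe.toFinite.toFinset.card := by
      apply Finset.card_le_card_of_injOn
        (fun x => if (Qn n).Adj x u then s(x, u) else s(x, v))
      · intro x hx
        simp only [hGdef, Finset.mem_coe, Finset.mem_filter, Finset.mem_univ, true_and] at hx
        obtain ⟨hmem, hadj⟩ := hx
        rw [Finset.mem_coe, Set.Finite.mem_toFinset]
        by_cases hau : (Qn n).Adj x u
        · simp only [hau, if_true]
          have := hcon x hmem u (hS ▸ (by simp : u ∈ ({u, v} : Set _)))
          rw [SimpleGraph.deleteEdges_adj] at this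
          push_neg at this
          exact this hau
        · simp only [hau, if_false]
          have hav : (Qn n).Adj x v := hadj.resolve_left hau
          have := hcon x hmem v (hS ▸ (by simp : v ∈ ({u, v} : Set _)))
          rw [SimpleGraph.deleteEdges_adj] at this
          push_neg at this
          exact this hav
      · intro x hx x' hx' heq
        simp only [hGdef, Finset.coe_filter, Set.mem_setOf_eq, Finset.mem_univ,
          true_and] at hx hx'
        have hxne : x ∉ F₁ ∪ F₂ := hx.1
        have hx'ne : x' ∉ F₁ ∪ F₂ := hx'.1
        have key : ∀ w w' : Fin n → Bool, w ∈ ({u, v} : Set _) → w' ∈ ({u, v} : Set _) →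
            s(x, w) = s(x', w') → x = x' := by
          intro w w' hw hw' hs
          rw [Sym2.eq_iff] at hs
          rcases hs with ⟨hxx, _⟩ | ⟨hxw', hwx'⟩
          · exact hxx
          · exfalso
            apply hxne
            subst hxw'
            rcases hw' with rfl | rfl
            · exact huF
            · exact hvF
        by_cases hau : (Qn n).Adj x u <;> by_cases hau' : (Qn n).Adj x' u <;>
          simp only [hau, hau', if_true, if_false] at heq
        · exact key u u (by simp) (by simp) heq
        · exact key u v (by simp) (by simp) heq
        · exact key v u (by simp) (by simp) heq
        · exact key v v (by simp) (by simp) heq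
    have : Fe.toFinite.toFinset.card = Fe.ncard := (Set.ncard_eq_toFinset_card _ _).symm
    omega
  have hcards : B.card ≤ G.card + bad.card :=
    (Finset.card_le_card hBsub).trans (Finset.card_union_le _ _)
  omega
end
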